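/- Let n ≥ 2, β ≥ 0, d ≥ n, and let x_1(0),...,x_n(0) ∈ S^{d-1} be pairwise orthogonal. For the solution of the self-attention dynamics ẋ_i = P^⊥_{x_i}((1/Z_{β,i}) Σ_j e^{β⟨x_i,x_j⟩} x_j), the inner product ⟨x_i(t), x_j(t)⟩ is the same for all pairs of distinct indices i ≠ j and all t ≥ 0. -/

import Mathlib

open Set
open scoped RealInnerProductSpace

/-- The self-attention vector field on the sphere. -/
noncomputable def SAfield {d n : ℕ} (β : ℝ) (x : Fin n → EuclideanSpace ℝ (Fin d))
    (i : Fin n) : EuclideanSpace ℝ (Fin d) :=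
  let v := (∑ k, Real.exp (β * ⟪x i, x k⟫))⁻¹ •
      ∑ j, Real.exp (β * ⟪x i, x j⟫) • x j
  v - ⟪x i, v⟫ • x i

set_option maxHeartbeats 1000000

lemma SAfield_perm {d n : ℕ} (β : ℝ) (x : Fin n → EuclideanSpace ℝ (Fin d))
    (σ : Equiv.Perm (Fin n)) (i : Fin n) :
    SAfield β (fun j => x (σ j)) i = SAfield β x (σ i) := by
  simp only [SAfield]
  rw [Equiv.sum_comp σ (fun k => Real.exp (β * ⟪x (σ i), x k⟫)),
    Equiv.sum_comp σ (fun j => Real.exp (β * ⟪x (σ i), x j⟫) • x j)]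

lemma SAfield_isometry {d n : ℕ} (β : ℝ) (x : Fin n → EuclideanSpace ℝ (Fin d))
    (U : EuclideanSpace ℝ (Fin d) ≃ₗᵢ[ℝ] EuclideanSpace ℝ (Fin d)) (i : Fin n) :
    SAfield β (fun j => U (x j)) i = U (SAfield β x i) := by
  simp only [SAfield, LinearIsometryEquiv.inner_map_map]
  have h : ∀ c : ℝ, ∀ v : EuclideanSpace ℝ (Fin d), c • U v = U (c • v) := fun c v =>
    (map_smul U c v).symm
  rw [show (∑ j, Real.exp (β * ⟪x i, x j⟫) • U (x j))
      = U (∑ j, Real.exp (β * ⟪x i, x j⟫) • x j) by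
    rw [map_sum]; exact Finset.sum_congr rfl fun j _ => h _ _]
  rw [h, LinearIsometryEquiv.inner_map_map, h, ← map_sub]

lemma contDiff_SA {d n : ℕ} (hn : 0 < n) (β : ℝ) :
    ContDiff ℝ 1 (fun x : Fin n → EuclideanSpace ℝ (Fin d) => fun i => SAfield β x i) := by
  haveI : Nonempty (Fin n) := Fin.pos_iff_nonempty.mp hn
  rw [contDiff_pi]
  intro i
  have hx : ∀ k : Fin n, ContDiff ℝ 1
      (fun x : Fin n → EuclideanSpace ℝ (Fin d) => x k) := fun k =>
    contDiff_apply ℝ (EuclideanSpace ℝ (Fin d)) k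
  have he : ∀ k : Fin n, ContDiff ℝ 1
      (fun x : Fin n → EuclideanSpace ℝ (Fin d) => Real.exp (β * ⟪x i, x k⟫)) := fun k =>
    Real.contDiff_exp.comp (contDiff_const.mul ((hx i).inner ℝ (hx k)))
  have hS : ContDiff ℝ 1 (fun x : Fin n → EuclideanSpace ℝ (Fin d) =>
      ∑ k, Real.exp (β * ⟪x i, x k⟫)) := ContDiff.sum fun k _ => he k
  have hSne : ∀ x : Fin n → EuclideanSpace ℝ (Fin d),
      (∑ k, Real.exp (β * ⟪x i, x k⟫)) ≠ 0 := fun x =>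
    ne_of_gt (Finset.sum_pos (fun k _ => Real.exp_pos _) Finset.univ_nonempty)
  have hv : ContDiff ℝ 1 (fun x : Fin n → EuclideanSpace ℝ (Fin d) =>
      (∑ k, Real.exp (β * ⟪x i, x k⟫))⁻¹ • ∑ j, Real.exp (β * ⟪x i, x j⟫) • x j) :=
    (hS.inv hSne).smul (ContDiff.sum fun j _ => (he j).smul (hx j))
  exact hv.sub (((hx i).inner ℝ hv).smul (hx i))

lemma exists_isometry {d n : ℕ} (hd : n ≤ d) (v w : Fin n → EuclideanSpace ℝ (Fin d))
    (hv : Orthonormal ℝ v) (hw : Orthonormal ℝ w) :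
    ∃ U : EuclideanSpace ℝ (Fin d) ≃ₗᵢ[ℝ] EuclideanSpace ℝ (Fin d), ∀ i, U (v i) = w i := by
  have hcard : Module.finrank ℝ (EuclideanSpace ℝ (Fin d)) = Fintype.card (Fin d) := by
    simp [finrank_euclideanSpace]
  set s : Set (Fin d) := {k | (k : ℕ) < n} with hs
  have key : ∀ u : Fin n → EuclideanSpace ℝ (Fin d), Orthonormal ℝ u →
      ∃ b : OrthonormalBasis (Fin d) ℝ (EuclideanSpace ℝ (Fin d)),
        ∀ i : Fin n, b (Fin.castLE hd i) = u i := by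
    intro u hu
    set u' : Fin d → EuclideanSpace ℝ (Fin d) :=
      fun k => if h : (k : ℕ) < n then u ⟨k, h⟩ else 0 with hu'
    have hres : Orthonormal ℝ (s.restrict u') := by
      have heq : s.restrict u' = u ∘ (fun k : s => (⟨(k : Fin d), k.2⟩ : Fin n)) := by
        funext k
        simp only [restrict, hu', Function.comp_apply]
        exact dif_pos k.2
      rw [heq]
      refine hu.comp _ (fun a b hab => Subtype.ext (Fin.val_injective ?_))
      have h2 := congrArg Fin.val hab
      exact h2
    obtain ⟨b, hb⟩ := hres.exists_orthonormalBasis_extension_of_card_eq hcard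
    refine ⟨b, fun i => ?_⟩
    have hi : (Fin.castLE hd i) ∈ s := i.2
    rw [hb _ hi]
    simp [hu']
  obtain ⟨b, hb⟩ := key v hv
  obtain ⟨b', hb'⟩ := key w hw
  refine ⟨b.repr.trans b'.repr.symm, fun i => ?_⟩
  rw [LinearIsometryEquiv.trans_apply, ← hb i, ← hb' i, OrthonormalBasis.repr_self,
    OrthonormalBasis.repr_symm_single]

lemma exists_lip {d n : ℕ} (hn : 0 < n) (β : ℝ) :
    ∃ K : NNReal, LipschitzOnWith K
      (fun x : Fin n → EuclideanSpace ℝ (Fin d) => fun i => SAfield β x i)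
      (Metric.closedBall 0 1) := by
  set F := fun x : Fin n → EuclideanSpace ℝ (Fin d) => fun i => SAfield β x i with hF
  have hcd := contDiff_SA (d := d) hn β
  have hc : Continuous fun x => fderiv ℝ F x := hcd.continuous_fderiv one_ne_zero
  obtain ⟨C, hC⟩ := (isCompact_closedBall (0 : Fin n → EuclideanSpace ℝ (Fin d))
    1).exists_bound_of_continuousOn hc.continuousOn
  refine ⟨Real.toNNReal C, Convex.lipschitzOnWith_of_nnnorm_fderiv_le
    (fun y _ => (hcd.differentiable one_ne_zero).differentiableAt) (fun y hy => ?_)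
    (convex_closedBall 0 1)⟩
  rw [← NNReal.coe_le_coe, coe_nnnorm, Real.coe_toNNReal']
  exact le_max_of_le_left (hC y hy)

/-- For pairwise orthogonal initial data on `S^{d-1}` (with `d ≥ n`), under the
self-attention dynamics the inner product `⟨x_i(t), x_j(t)⟩` is the same for all
pairs of distinct indices, at every time `t ≥ 0`. -/
theorem stmt_13 {d n : ℕ} (hn : 2 ≤ n) (hd : n ≤ d) (β : ℝ) (hβ : 0 ≤ β)
    (x : Fin n → ℝ → EuclideanSpace ℝ (Fin d))
    (hsphere : ∀ i t, x i t ∈ Metric.sphere (0 : EuclideanSpace ℝ (Fin d)) 1)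
    (hode : ∀ i, ∀ t ∈ Ici (0:ℝ),
      HasDerivAt (x i) (SAfield β (fun j => x j t) i) t)
    (horth : ∀ i j, i ≠ j → ⟪x i 0, x j 0⟫ = 0) :
    ∀ t ∈ Ici (0:ℝ), ∀ i j k l : Fin n, i ≠ j → k ≠ l →
      ⟪x i t, x j t⟫ = ⟪x k t, x l t⟫ := by
  have hn0 : 0 < n := lt_of_lt_of_le two_pos hn
  intro t ht i j k l hij hkl
  -- build the permutation sending k ↦ i, l ↦ j
  have him : i ≠ Equiv.swap k i l := by
    by_cases h1 : l = k
    · exact absurd h1.symm hkl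
    · by_cases h2 : l = i
      · subst h2; rw [Equiv.swap_apply_right]; exact Ne.symm hkl
      · rw [Equiv.swap_apply_of_ne_of_ne h1 h2]; exact Ne.symm h2
  set σ : Equiv.Perm (Fin n) :=
    (Equiv.swap k i).trans (Equiv.swap (Equiv.swap k i l) j) with hσ
  have hσk : σ k = i := by
    simp only [hσ, Equiv.trans_apply, Equiv.swap_apply_left]
    exact Equiv.swap_apply_of_ne_of_ne him hij
  have hσl : σ l = j := by
    simp only [hσ, Equiv.trans_apply, Equiv.swap_apply_left]
  -- orthonormality of the initial configurations
  have hnorm : ∀ p : Fin n, ∀ s : ℝ, ‖x p s‖ = 1 := fun p s => by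
    have := hsphere p s; rwa [mem_sphere_zero_iff_norm] at this
  have horthb : ∀ σ' : Equiv.Perm (Fin n), Orthonormal ℝ (fun p => x (σ' p) 0) := by
    intro σ'
    rw [orthonormal_iff_ite]
    intro a b
    by_cases hab : a = b
    · subst hab
      rw [if_pos rfl, real_inner_self_eq_norm_mul_norm, hnorm, one_mul]
    · rw [if_neg hab]
      exact horth _ _ (fun h => hab (σ'.injective h))
  have hv : Orthonormal ℝ (fun p => x p 0) := by
    have := horthb 1; simpa using this
  obtain ⟨U, hU⟩ := exists_isometry hd (fun p => x p 0) (fun p => x (σ p) 0) hv (horthb σ)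
  -- the two solutions
  set F := fun p : Fin n → EuclideanSpace ℝ (Fin d) => fun q => SAfield β p q with hF
  set X : ℝ → Fin n → EuclideanSpace ℝ (Fin d) := fun s p => x (σ p) s with hX
  set Y : ℝ → Fin n → EuclideanSpace ℝ (Fin d) := fun s p => U (x p s) with hY
  obtain ⟨K, hLip⟩ := exists_lip (d := d) hn0 β
  have hXd : ∀ s ∈ Ici (0:ℝ), HasDerivAt X (F (X s)) s := by
    intro s hs
    refine hasDerivAt_pi.mpr fun p => ?_
    have h0 := hode (σ p) s hs
    have hperm : SAfield β (fun q => x (σ q) s) p = SAfield β (fun q => x q s) (σ p) :=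
      SAfield_perm β (fun q => x q s) σ p
    simp only [hX, hF]
    rw [hperm]
    exact h0
  have hYd : ∀ s ∈ Ici (0:ℝ), HasDerivAt Y (F (Y s)) s := by
    intro s hs
    refine hasDerivAt_pi.mpr fun p => ?_
    have h0 := hode p s hs
    have h1 : HasDerivAt (fun s' => U (x p s')) (U (SAfield β (fun q => x q s) p)) s :=
      (U.toLinearIsometry.toContinuousLinearMap.hasFDerivAt).comp_hasDerivAt s h0
    have hiso : SAfield β (fun q => U (x q s)) p = U (SAfield β (fun q => x q s) p) :=
      SAfield_isometry β (fun q => x q s) U p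
    simp only [hY, hF]
    rw [hiso]
    exact h1
  have hXmem : ∀ s : ℝ, X s ∈ Metric.closedBall (0 : Fin n → EuclideanSpace ℝ (Fin d)) 1 := by
    intro s
    rw [Metric.mem_closedBall, dist_zero_right]
    exact (pi_norm_le_iff_of_nonneg zero_le_one).mpr fun p => le_of_eq (hnorm _ _)
  have hYmem : ∀ s : ℝ, Y s ∈ Metric.closedBall (0 : Fin n → EuclideanSpace ℝ (Fin d)) 1 := by
    intro s
    rw [Metric.mem_closedBall, dist_zero_right]
    refine (pi_norm_le_iff_of_nonneg zero_le_one).mpr fun p => le_of_eq ?_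
    rw [hY]; rw [U.norm_map]; exact hnorm _ _
  have h00 : X 0 = Y 0 := funext fun p => (hU p).symm
  have key : EqOn X Y (Icc 0 t) := by
    refine ODE_solution_unique_of_mem_Icc_right
      (v := fun _ => F) (s := fun _ => Metric.closedBall 0 1) (fun _ _ => hLip)
      (fun s hs => ((hXd s hs.1).continuousAt).continuousWithinAt)
      (fun s hs => (hXd s hs.1).hasDerivWithinAt)
      (fun s _ => hXmem s)
      (fun s hs => ((hYd s hs.1).continuousAt).continuousWithinAt)
      (fun s hs => (hYd s hs.1).hasDerivWithinAt)
      (fun s _ => hYmem s) h00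
  have hXYt : X t = Y t := key ⟨ht, le_rfl⟩
  have hk : x i t = U (x k t) := by
    have h2 := congrFun hXYt k
    simp only [hX, hY] at h2
    rwa [hσk] at h2
  have hl : x j t = U (x l t) := by
    have h2 := congrFun hXYt l
    simp only [hX, hY] at h2
    rwa [hσl] at h2
  rw [hk, hl, U.inner_map_map]
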